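/- Let g : ℝ → ℝ be convex, monotonically decreasing, and continuously differentiable, and suppose 0 < λ < -lim_{τ→-∞} g'(τ). Then for any τ ∈ ℝ, the minimizer over γ ∈ ℝ of γ ↦ g(τ + γ) + λ|γ| equals (g')⁻¹(-λ) - τ when τ ≤ (g')⁻¹(-λ), and equals 0 when τ > (g')⁻¹(-λ). -/
import Mathlib

/-- Tangent line inequality for a convex differentiable function on ℝ. -/
lemma tangent_le_of_convexOn {g : ℝ → ℝ} (hconv : ConvexOn ℝ Set.univ g)
    (hg : Differentiable ℝ g) (x y : ℝ) :
    g x + deriv g x * (y - x) ≤ g y := by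
  rcases lt_trichotomy x y with h | h | h
  · have := hconv.deriv_le_slope (Set.mem_univ x) (Set.mem_univ y) h (hg x)
    rw [slope_def_field, le_div_iff₀ (by linarith : (0:ℝ) < y - x)] at this
    nlinarith [this]
  · simp [h]
  · have := hconv.slope_le_deriv (Set.mem_univ y) (Set.mem_univ x) h (hg x)
    rw [slope_def_field, div_le_iff₀ (by linarith : (0:ℝ) < x - y)] at this
    nlinarith [this]

/-- Margin-based loss proposition: for `g` convex, decreasing and continuously
differentiable, with `0 < lam < -lim_{τ→-∞} g'(τ)`, the minimizer of
`γ ↦ g(τ + γ) + lam|γ|` is `(g')⁻¹(-lam) - τ` when `τ ≤ (g')⁻¹(-lam)` and `0` otherwise. -/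
theorem margin_loss_minimizer (g : ℝ → ℝ) (lam : ℝ) (hlam : 0 < lam)
    (hconv : ConvexOn ℝ Set.univ g)
    (hdec : ∀ s t : ℝ, s ≤ t → g t ≤ g s)
    (hg : Differentiable ℝ g) (hderiv : Continuous (deriv g))
    (l : ℝ) (hlim : Filter.Tendsto (deriv g) Filter.atBot (nhds l))
    (hlt : lam < -l)
    (a : ℝ) (ha : deriv g a = -lam) (τ : ℝ) :
    let γhat := if τ ≤ a then a - τ else 0
    ∀ γ : ℝ, g (τ + γhat) + lam * |γhat| ≤ g (τ + γ) + lam * |γ| := by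
  intro γhat γ
  have hmono : MonotoneOn (deriv g) Set.univ :=
    hconv.monotoneOn_deriv (fun x _ => hg x)
  by_cases hτ : τ ≤ a
  · have hγhat : γhat = a - τ := if_pos hτ
    have habs : |γhat| = a - τ := by rw [hγhat]; exact abs_of_nonneg (by linarith)
    have htan := tangent_le_of_convexOn hconv hg a (τ + γ)
    rw [ha] at htan
    have hγ : γ ≤ |γ| := le_abs_self γ
    rw [hγhat, abs_of_nonneg (show (0:ℝ) ≤ a - τ by linarith),
      show τ + (a - τ) = a by ring]
    nlinarith [htan, hγ]
  · have hγhat : γhat = 0 := if_neg hτ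
    push_neg at hτ
    rw [hγhat, abs_zero, mul_zero, add_zero, add_zero]
    rcases le_or_gt γ 0 with hγ | hγ
    · have h1 : g τ ≤ g (τ + γ) := hdec _ _ (by linarith)
      have h2 : 0 ≤ lam * |γ| := mul_nonneg hlam.le (abs_nonneg γ)
      linarith
    · have htan := tangent_le_of_convexOn hconv hg τ (τ + γ)
      have hd : deriv g a ≤ deriv g τ :=
        hmono (Set.mem_univ a) (Set.mem_univ τ) hτ.le
      rw [ha] at hd
      rw [abs_of_pos hγ]
      nlinarith [htan, hd]
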